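/- Let G be a finite simple graph, k ≥ 1, M a k-limited spanning subgraph of G, and P = v0 e1 v1 … e_n v_n an M-augmenting trail. Suppose v_i = v_j for some 0 ≤ i < j ≤ n with j − i even. Then the walk obtained from P by deleting the segment between the i-th and j-th vertex visits (i.e., v0 e1 … v_i e_{j+1} v_{j+1} … e_n v_n) is again an M-augmenting trail, of strictly smaller length. -/

import Mathlib

open SimpleGraph

variable {V : Type*}

/-- The degree of a vertex `v` in a (sub)graph `M`. -/
noncomputable def mdeg (M : SimpleGraph V) (v : V) : ℕ := (M.neighborSet v).ncard

/-- `M` is a `k`-limited spanning subgraph of `G`: a subgraph on all the vertices of `G`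
with all degrees at most `k`. -/
def IsKLimitedSpanning (G M : SimpleGraph V) (k : ℕ) : Prop :=
  M ≤ G ∧ ∀ v : V, mdeg M v ≤ k

/-- `F` is a `k`-factor of `G`: a spanning subgraph all of whose degrees equal `k`. -/
def IsKFactor (G F : SimpleGraph V) (k : ℕ) : Prop :=
  F ≤ G ∧ ∀ v : V, mdeg F v = k

/-- The deficiency `σ(M) = ∑_{v} (k - deg_M v)`. -/
noncomputable def sigmaDef [Fintype V] (M : SimpleGraph V) (k : ℕ) : ℕ :=
  ∑ v : V, (k - mdeg M v)

/-- An `M`-alternating trail: a trail whose consecutive edges alternate between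
membership and non-membership in `E(M)`. -/
def IsAltTrail {G : SimpleGraph V} (M : SimpleGraph V) {u v : V} (p : G.Walk u v) : Prop :=
  p.IsTrail ∧ ∀ (i : ℕ) (h : i + 1 < p.edges.length),
    ((p.edges[i]'(Nat.lt_of_succ_lt h)) ∈ M.edgeSet ↔ (p.edges[i+1]'h) ∉ M.edgeSet)

/-- An `M`-augmenting trail (with respect to the bound `k`): an `M`-alternating trail whose
first and last edges are not in `E(M)`, whose endpoints are unfilled in `M`, all of whose
inner vertex visits are filled in `M`, and which, if closed at `v₀ = u = v`, additionally
satisfies `deg_M v₀ < k - 1`. -/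
def IsAugTrail (G M : SimpleGraph V) (k : ℕ) {u v : V} (p : G.Walk u v) : Prop :=
  IsAltTrail M p ∧
  p.edges ≠ [] ∧
  (∀ e, p.edges.head? = some e → e ∉ M.edgeSet) ∧
  (∀ e, p.edges.getLast? = some e → e ∉ M.edgeSet) ∧
  mdeg M u < k ∧ mdeg M v < k ∧
  (∀ w ∈ p.support.tail.dropLast, mdeg M w = k) ∧
  (u = v → mdeg M u < k - 1)

/-- The initial segment of a walk, consisting of its first `n` edges. -/
def walkTake {G : SimpleGraph V} : {u v : V} → (p : G.Walk u v) → (n : ℕ) →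
    G.Walk u (p.getVert n)
  | _, _, SimpleGraph.Walk.nil, _ => SimpleGraph.Walk.nil
  | _, _, SimpleGraph.Walk.cons _ _, 0 => SimpleGraph.Walk.nil
  | _, _, SimpleGraph.Walk.cons h q, n + 1 => SimpleGraph.Walk.cons h (walkTake q n)

/-- The final segment of a walk, obtained by deleting its first `n` edges. -/
def walkDrop {G : SimpleGraph V} : {u v : V} → (p : G.Walk u v) → (n : ℕ) →
    G.Walk (p.getVert n) v
  | _, _, SimpleGraph.Walk.nil, _ => SimpleGraph.Walk.nil
  | _, _, SimpleGraph.Walk.cons h q, 0 => SimpleGraph.Walk.cons h q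
  | _, _, SimpleGraph.Walk.cons _ q, n + 1 => walkDrop q n


section Aux

variable {G : SimpleGraph V}

lemma walkTake_edges : ∀ {u v : V} (p : G.Walk u v) (n : ℕ),
    (walkTake p n).edges = p.edges.take n
  | _, _, .nil, _ => by simp [walkTake]
  | _, _, .cons _ _, 0 => rfl
  | _, _, .cons h q, n + 1 => by
      simp [walkTake, walkTake_edges q n]

lemma walkDrop_edges : ∀ {u v : V} (p : G.Walk u v) (n : ℕ),
    (walkDrop p n).edges = p.edges.drop n
  | _, _, .nil, _ => by simp [walkDrop]
  | _, _, .cons _ _, 0 => rfl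
  | _, _, .cons h q, n + 1 => by
      simp [walkDrop, walkDrop_edges q n]

lemma walkTake_length {u v : V} (p : G.Walk u v) (n : ℕ) :
    (walkTake p n).length = min n p.length := by
  have h1 := (walkTake p n).length_edges
  have h2 := p.length_edges
  rw [walkTake_edges] at h1
  simp at h1
  omega

lemma walkDrop_length {u v : V} (p : G.Walk u v) (n : ℕ) :
    (walkDrop p n).length = p.length - n := by
  have h1 := (walkDrop p n).length_edges
  have h2 := p.length_edges
  rw [walkDrop_edges] at h1
  simp at h1
  omega

lemma walkDrop_getVert : ∀ {u v : V} (p : G.Walk u v) (n s : ℕ),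
    (walkDrop p n).getVert s = p.getVert (n + s)
  | _, _, .nil, _, _ => rfl
  | _, _, .cons _ _, 0, _ => by
      simp [walkDrop, Nat.zero_add]
      rfl
  | _, _, .cons h q, n + 1, s => by
      show (walkDrop q n).getVert s = (SimpleGraph.Walk.cons h q).getVert (n + 1 + s)
      rw [show n + 1 + s = (n + s) + 1 from by omega, SimpleGraph.Walk.getVert_cons_succ]
      exact walkDrop_getVert q n s

lemma walkTake_getVert : ∀ {u v : V} (p : G.Walk u v) (n s : ℕ),
    (walkTake p n).getVert s = p.getVert (min s n)
  | _, _, .nil, _, _ => rfl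
  | _, _, .cons _ _, 0, s => by
      simp only [Nat.min_zero]
      rfl
  | _, _, .cons _ _, n + 1, 0 => by
      simp [walkTake, SimpleGraph.Walk.getVert_zero]
  | _, _, .cons h q, n + 1, s + 1 => by
      rw [Nat.succ_min_succ]
      simpa [walkTake, SimpleGraph.Walk.getVert_cons_succ] using walkTake_getVert q n s

lemma support_getElem : ∀ {u v : V} (p : G.Walk u v) (m : ℕ) (h : m < p.support.length),
    p.support[m] = p.getVert m
  | _, _, .nil, 0, _ => rfl
  | _, _, .cons _ _, 0, _ => rfl
  | _, _, .cons h q, m + 1, hm => by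
      simp only [SimpleGraph.Walk.support_cons, List.getElem_cons_succ,
        SimpleGraph.Walk.getVert_cons_succ]
      exact support_getElem q m (by simpa [SimpleGraph.Walk.support_cons] using hm)

lemma mem_inner_iff {u v : V} (p : G.Walk u v) (x : V) :
    x ∈ p.support.tail.dropLast ↔ ∃ t, 1 ≤ t ∧ t + 1 ≤ p.length ∧ p.getVert t = x := by
  have hls := p.length_support
  rw [List.mem_iff_getElem]
  constructor
  · rintro ⟨m, hm, rfl⟩
    have h1 : m < p.support.tail.length := by simp at hm ⊢; omega
    have h2 : m + 1 < p.support.length := by simp at hm ⊢; omega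
    refine ⟨m + 1, by omega, by simp at hm; omega, ?_⟩
    rw [List.getElem_dropLast, List.getElem_tail, support_getElem]
  · rintro ⟨t, ht1, ht2, rfl⟩
    have h0 : t - 1 < p.support.tail.dropLast.length := by simp; omega
    refine ⟨t - 1, h0, ?_⟩
    rw [List.getElem_dropLast, List.getElem_tail, support_getElem]
    congr 1
    omega

lemma parity_of_alt {M : SimpleGraph V} {u v : V} {p : G.Walk u v}
    (halt : IsAltTrail M p) (hhead : ∀ e, p.edges.head? = some e → e ∉ M.edgeSet) :
    ∀ t (h : t < p.edges.length), (p.edges[t] ∈ M.edgeSet ↔ Odd t) := by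
  intro t
  induction t with
  | zero =>
    intro h
    have hh : p.edges.head? = some (p.edges[0]) := by
      rw [List.head?_eq_getElem?, List.getElem?_eq_getElem h]
    simp only [Nat.odd_iff]
    exact ⟨fun hmem => absurd hmem (hhead _ hh), by omega⟩
  | succ t ih =>
    intro h
    have halt2 := halt.2 t h
    have iht := ih (Nat.lt_of_succ_lt h)
    rw [iht] at halt2
    have hx : p.edges[t + 1] ∈ M.edgeSet ↔ ¬ Odd t := by
      constructor
      · intro hm ho; exact (halt2.mp ho) hm
      · intro hno; by_contra hm; exact hno (halt2.mpr hm)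
    rw [hx, Nat.odd_iff, Nat.odd_iff]
    omega

end Aux

/-- If an `M`-augmenting trail `P = v₀ e₁ v₁ … e_n v_n` has a repeated
vertex visit `v_i = v_j` with `i < j ≤ n` and `j − i` even, then the walk obtained by
deleting the segment between the `i`-th and `j`-th vertex visits is again an
`M`-augmenting trail, of strictly smaller length. -/
theorem shortcut_augTrail [Fintype V] (G M : SimpleGraph V) (k : ℕ) (hk : 1 ≤ k)
    (hM : IsKLimitedSpanning G M k) {u w : V} (p : G.Walk u w)
    (hP : IsAugTrail G M k p) (i j : ℕ) (hij : i < j) (hj : j ≤ p.length)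
    (heven : Even (j - i)) (heq : p.getVert i = p.getVert j) :
    IsAugTrail G M k ((walkTake p i).append ((walkDrop p j).copy heq.symm rfl)) ∧
      ((walkTake p i).append ((walkDrop p j).copy heq.symm rfl)).length < p.length := by
  obtain ⟨⟨htrail, halt⟩, hne, hhead, hlast, hu, hw, hinner, hclosed⟩ := hP
  obtain ⟨m, hm⟩ := heven
  set q := (walkTake p i).append ((walkDrop p j).copy heq.symm rfl) with hq
  have hplen : p.edges.length = p.length := p.length_edges
  have hn1 : 1 ≤ p.length := by
    have := List.length_pos_iff.mpr hne; omega
  have hEq : q.edges = p.edges.take i ++ p.edges.drop j := by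
    rw [hq, SimpleGraph.Walk.edges_append, SimpleGraph.Walk.edges_copy,
      walkTake_edges, walkDrop_edges]
  have hpar := parity_of_alt ⟨htrail, halt⟩ hhead
  have hnodd : p.length % 2 = 1 := by
    have hlt : p.length - 1 < p.edges.length := by omega
    have hgl : p.edges.getLast? = some (p.edges[p.length - 1]'hlt) := by
      rw [List.getLast?_eq_getElem?, hplen, List.getElem?_eq_getElem (by omega : p.length - 1 < p.edges.length)]
    have hno : ¬ Odd (p.length - 1) := fun ho => (hlast _ hgl) ((hpar _ hlt).mpr ho)
    rw [Nat.odd_iff] at hno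
    omega
  have hqlen : q.length = i + (p.length - j) := by
    rw [hq, SimpleGraph.Walk.length_append, SimpleGraph.Walk.length_copy,
      walkTake_length, walkDrop_length]
    omega
  have hqElen : q.edges.length = i + (p.length - j) := by
    rw [q.length_edges, hqlen]
  have hqE : ∀ s (hs : s < q.edges.length), (q.edges[s] ∈ M.edgeSet ↔ Odd s) := by
    intro s hs
    have hs' : s < i + (p.length - j) := by omega
    have htl : (p.edges.take i).length = i := by simp; omega
    rcases Nat.lt_or_ge s i with h' | h'
    · have : q.edges[s] = p.edges[s]'(by omega) := by
        simp only [hEq, List.getElem_append]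
        rw [dif_pos (by omega)]
        exact List.getElem_take
      rw [this, hpar s (by omega)]
    · have hb : j + (s - i) < p.edges.length := by omega
      have : q.edges[s] = p.edges[j + (s - i)]'hb := by
        simp only [hEq, List.getElem_append]
        rw [dif_neg (by omega)]
        rw [List.getElem_drop]
        congr 1
        omega
      rw [this, hpar _ hb, Nat.odd_iff, Nat.odd_iff]
      omega
  have hqne : q.edges ≠ [] := by
    intro hh
    have := congrArg List.length hh
    rw [hqElen] at this
    simp at this
    omega
  have hq0 : 0 < q.edges.length := List.length_pos_iff.mpr hqne
  refine ⟨⟨⟨?_, ?_⟩, hqne, ?_, ?_, hu, hw, ?_, hclosed⟩, by omega⟩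
  · -- trail
    refine ⟨List.Sublist.nodup ?_ htrail.edges_nodup⟩
    rw [hEq]
    have hdd : (p.edges.drop j).Sublist (p.edges.drop i) := by
      rw [show j = i + (j - i) from by omega, ← List.drop_drop]
      exact List.drop_sublist _ _
    conv_rhs => rw [← List.take_append_drop i p.edges]
    exact (List.append_sublist_append_left _).mpr hdd
  · -- alternation
    intro s h
    rw [hqE s (Nat.lt_of_succ_lt h), hqE (s + 1) h, Nat.odd_iff, Nat.odd_iff]
    omega
  · -- head
    intro e he
    rw [List.head?_eq_getElem?, List.getElem?_eq_getElem hq0] at he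
    obtain rfl : q.edges[0] = e := Option.some.inj he
    intro hmem
    have := (hqE 0 hq0).mp hmem
    rw [Nat.odd_iff] at this
    omega
  · -- last
    intro e he
    have hlt : q.edges.length - 1 < q.edges.length := by omega
    rw [List.getLast?_eq_getElem?, List.getElem?_eq_getElem hlt] at he
    obtain rfl : q.edges[q.edges.length - 1] = e := Option.some.inj he
    intro hmem
    have := (hqE _ hlt).mp hmem
    rw [Nat.odd_iff] at this
    omega
  · -- inner vertices filled
    intro x hx
    rw [mem_inner_iff] at hx
    obtain ⟨t, ht1, ht2, hxv⟩ := hx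
    rw [hqlen] at ht2
    have hAlen : (walkTake p i).length = i := by rw [walkTake_length]; omega
    have hval : q.getVert t = if t < i then p.getVert t else p.getVert (j + (t - i)) := by
      rw [hq, SimpleGraph.Walk.getVert_append, hAlen]
      split
      · rw [walkTake_getVert]
        congr 1
        omega
      · rw [SimpleGraph.Walk.getVert_copy, walkDrop_getVert]
    apply hinner
    rw [mem_inner_iff]
    by_cases hti : t < i
    · exact ⟨t, ht1, by omega, by rw [← hxv, hval, if_pos hti]⟩
    · exact ⟨j + (t - i), by omega, by omega, by rw [← hxv, hval, if_neg hti]⟩
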